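/- Fix ε > 0, τ ∈ ℝ, T ∈ ℕ, and two sequences a, a′ : {1, …, T} → ℝ with |a_t − a′_t| ≤ 1 for every t. Sample τ̂ = τ + Lap(2/ε) and, independently, fresh noises v_t ~ Lap(4/ε) independently across t; define Halt(a) to be the smallest t ≤ T with a_t + v_t ≥ τ̂, and ⊥ if no such t exists. Then for every subset S ⊆ {1, …, T} ∪ {⊥}, Pr[Halt(a) ∈ S] ≤ exp(ε)·Pr[Halt(a′) ∈ S]. -/

import Mathlib

open MeasureTheory ProbabilityTheory Classical
open scoped ENNReal

/-- The Laplace distribution on ℝ with scale `b`: density `x ↦ (1/(2b)) exp (-|x|/b)`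
with respect to Lebesgue measure. -/
noncomputable def laplace (b : ℝ) : Measure ℝ :=
  MeasureTheory.volume.withDensity fun x => ENNReal.ofReal ((1 / (2 * b)) * Real.exp (-|x| / b))

/-- The output space `{1, …, T} ∪ {⊥}` is modelled as `Option (Fin T)` with the
discrete σ-algebra. -/
instance (T : ℕ) : MeasurableSpace (Option (Fin T)) := ⊤

instance laplace_sigmaFinite (b : ℝ) : SigmaFinite (laplace b) := by
  unfold laplace; infer_instance

lemma laplace_map_le (b s : ℝ) (hb : 0 < b) :
    Measure.map (· + s) (laplace b) ≤ ENNReal.ofReal (Real.exp (|s| / b)) • laplace b := by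
  refine Measure.le_iff.mpr fun A hA => ?_
  have hA' : MeasurableSet ((· + s) ⁻¹' A) := measurable_add_const s hA
  rw [Measure.map_apply (measurable_add_const s) hA]
  rw [laplace, Measure.smul_apply, withDensity_apply _ hA', withDensity_apply _ hA, smul_eq_mul]
  set f : ℝ → ℝ≥0∞ := fun x => ENNReal.ofReal ((1 / (2 * b)) * Real.exp (-|x| / b)) with hf
  have key : ∀ x : ℝ, ((· + s) ⁻¹' A).indicator f x
      = (A.indicator fun y => f (y - s)) (x + s) := by
    intro x
    by_cases hx : x + s ∈ A <;> simp [Set.indicator, Set.mem_preimage, hx]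
  calc ∫⁻ x in (· + s) ⁻¹' A, f x ∂volume
      = ∫⁻ x, ((· + s) ⁻¹' A).indicator f x ∂volume := (lintegral_indicator hA' f).symm
    _ = ∫⁻ x, (A.indicator fun y => f (y - s)) (x + s) ∂volume := by simp_rw [key]
    _ = ∫⁻ y, (A.indicator fun y => f (y - s)) y ∂volume := lintegral_add_right_eq_self _ s
    _ = ∫⁻ y in A, f (y - s) ∂volume := lintegral_indicator hA _
    _ ≤ ∫⁻ y in A, ENNReal.ofReal (Real.exp (|s| / b)) * f y ∂volume := by
        refine lintegral_mono fun y => ?_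
        rw [hf]
        simp only []
        rw [← ENNReal.ofReal_mul (Real.exp_nonneg _)]
        refine ENNReal.ofReal_le_ofReal ?_
        have h1 : -|y - s| / b ≤ |s| / b + -|y| / b := by
          rw [← add_div]
          have h2 := abs_sub_abs_le_abs_sub y s
          have h3 : -|y - s| ≤ |s| + -|y| := by linarith
          exact div_le_div_of_nonneg_right h3 hb.le
        calc 1 / (2 * b) * Real.exp (-|y - s| / b)
            ≤ 1 / (2 * b) * Real.exp (|s| / b + -|y| / b) := by
              refine mul_le_mul_of_nonneg_left (Real.exp_le_exp.mpr h1) (by positivity)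
          _ = Real.exp (|s| / b) * (1 / (2 * b) * Real.exp (-|y| / b)) := by
              rw [Real.exp_add]; ring
    _ = ENNReal.ofReal (Real.exp (|s| / b)) * ∫⁻ y in A, f y ∂volume :=
        lintegral_const_mul' _ _ ENNReal.ofReal_ne_top

lemma prod_le_smul {X Y : Type*} [MeasurableSpace X] [MeasurableSpace Y]
    {μ₁ μ₂ : Measure X} {ν₁ ν₂ : Measure Y} [SFinite ν₁] [SFinite ν₂]
    (c d : ℝ≥0∞) (hd : d ≠ ∞) (h₁ : μ₁ ≤ c • μ₂) (h₂ : ν₁ ≤ d • ν₂) :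
    μ₁.prod ν₁ ≤ (c * d) • μ₂.prod ν₂ := by
  refine Measure.le_iff.mpr fun A hA => ?_
  rw [Measure.smul_apply, smul_eq_mul, Measure.prod_apply hA, Measure.prod_apply hA]
  calc ∫⁻ x, ν₁ (Prod.mk x ⁻¹' A) ∂μ₁
      ≤ ∫⁻ x, d * ν₂ (Prod.mk x ⁻¹' A) ∂μ₁ := by
        refine lintegral_mono fun x => ?_
        simpa using Measure.le_iff'.mp h₂ (Prod.mk x ⁻¹' A)
    _ = d * ∫⁻ x, ν₂ (Prod.mk x ⁻¹' A) ∂μ₁ := lintegral_const_mul' _ _ hd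
    _ ≤ d * ∫⁻ x, ν₂ (Prod.mk x ⁻¹' A) ∂(c • μ₂) :=
        mul_le_mul_right (lintegral_mono' h₁ le_rfl) d
    _ = c * d * ∫⁻ x, ν₂ (Prod.mk x ⁻¹' A) ∂μ₂ := by
        rw [lintegral_smul_measure]; ring

lemma pi_map_shift_le {T : ℕ} (b : ℝ) (hb : 0 < b) (t : Fin T) (r : ℝ) :
    Measure.map (fun (v : Fin T → ℝ) s => v s + (if s = t then r else 0))
        (Measure.pi fun _ : Fin T => laplace b)
      ≤ ENNReal.ofReal (Real.exp (|r| / b)) • Measure.pi fun _ : Fin T => laplace b := by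
  cases T with
  | zero => exact t.elim0
  | succ n =>
    set c := ENNReal.ofReal (Real.exp (|r| / b)) with hc
    set ν : Fin (n + 1) → Measure ℝ :=
      fun s => Measure.map (· + (if s = t then r else 0)) (laplace b) with hν
    haveI hsf : ∀ s, SigmaFinite (ν s) := fun s =>
      (MeasurableEquiv.addRight (if s = t then r else 0)).sigmaFinite_map
    have hmp : MeasurePreserving (fun (v : Fin (n + 1) → ℝ) s => v s + (if s = t then r else 0))
        (Measure.pi fun _ => laplace b) (Measure.pi ν) :=
      measurePreserving_pi _ _ (fun i => ⟨measurable_add_const _, rfl⟩)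
    rw [hmp.map_eq]
    set e := MeasurableEquiv.piFinSuccAbove (fun _ : Fin (n + 1) => ℝ) t with he
    have h1 : MeasurePreserving e (Measure.pi ν)
        ((ν t).prod (Measure.pi fun j => ν (t.succAbove j))) :=
      measurePreserving_piFinSuccAbove ν t
    have h2 : MeasurePreserving e (Measure.pi fun _ : Fin (n + 1) => laplace b)
        ((laplace b).prod (Measure.pi fun _ : Fin n => laplace b)) :=
      measurePreserving_piFinSuccAbove (fun _ : Fin (n + 1) => laplace b) t
    have hνa : (fun j : Fin n => ν (t.succAbove j)) = fun _ : Fin n => laplace b := by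
      funext j
      have hne : t.succAbove j ≠ t := Fin.succAbove_ne t j
      simp only [hν, if_neg hne]
      have : (fun x : ℝ => x + 0) = id := by funext x; simp
      rw [this, Measure.map_id]
    have hpi : Measure.pi ν
        = Measure.map e.symm ((ν t).prod (Measure.pi fun _ : Fin n => laplace b)) := by
      rw [← hνa]
      exact (h1.symm e).map_eq.symm
    have hνt : ν t ≤ c • laplace b := by
      simp only [hν, if_pos rfl]
      exact laplace_map_le b r hb
    have hprodle : (ν t).prod (Measure.pi fun _ : Fin n => laplace b)
        ≤ (c * 1) • (laplace b).prod (Measure.pi fun _ : Fin n => laplace b) :=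
      prod_le_smul c 1 ENNReal.one_ne_top hνt (by rw [one_smul])
    calc Measure.pi ν
        = Measure.map e.symm ((ν t).prod (Measure.pi fun _ : Fin n => laplace b)) := hpi
      _ ≤ Measure.map e.symm
          ((c * 1) • (laplace b).prod (Measure.pi fun _ : Fin n => laplace b)) :=
          Measure.map_mono hprodle e.symm.measurable
      _ = (c * 1) • Measure.map e.symm
          ((laplace b).prod (Measure.pi fun _ : Fin n => laplace b)) := Measure.map_smul _ _ _
      _ = c • Measure.pi fun _ : Fin (n + 1) => laplace b := by
          rw [mul_one, (h2.symm e).map_eq]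

lemma find?_dec_none {T : ℕ} {p : Fin T → Prop} :
    (Fin.find? fun t => decide (p t)) = none ↔ ∀ i, ¬ p i := by
  simp [Fin.find?_eq_none_iff]

lemma find?_dec_some {T : ℕ} {p : Fin T → Prop} {i : Fin T} :
    (Fin.find? fun t => decide (p t)) = some i ↔ p i ∧ ∀ j, p j → i ≤ j := by
  rw [Fin.find?_eq_some_iff]
  simp only [decide_eq_true_eq, decide_eq_false_iff_not]
  constructor
  · rintro ⟨h1, h2⟩; exact ⟨h1, fun j hj => not_lt.mp fun hlt => h2 j hlt hj⟩
  · rintro ⟨h1, h2⟩; exact ⟨h1, fun j hlt hj => absurd (h2 j hj) (not_le.mpr hlt)⟩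

lemma find_preimage_measurable {T : ℕ} (τ : ℝ) (b : Fin T → ℝ) (o : Option (Fin T)) :
    MeasurableSet ((fun ω : ℝ × (Fin T → ℝ) =>
      Fin.find? fun t => decide (b t + ω.2 t ≥ τ + ω.1)) ⁻¹' {o}) := by
  have hP : ∀ t : Fin T, MeasurableSet {ω : ℝ × (Fin T → ℝ) | τ + ω.1 ≤ b t + ω.2 t} :=
    fun t => measurableSet_le (measurable_const.add measurable_fst)
      (measurable_const.add ((measurable_pi_apply t).comp measurable_snd))
  cases o with
  | none =>
    have hset : ((fun ω : ℝ × (Fin T → ℝ) =>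
        Fin.find? fun t => decide (b t + ω.2 t ≥ τ + ω.1)) ⁻¹' {none})
        = ⋂ t, {ω : ℝ × (Fin T → ℝ) | τ + ω.1 ≤ b t + ω.2 t}ᶜ := by
      ext ω
      simp [Set.mem_preimage, find?_dec_none, Set.mem_iInter, ge_iff_le]
    rw [hset]
    exact MeasurableSet.iInter fun t => (hP t).compl
  | some t =>
    have hset : ((fun ω : ℝ × (Fin T → ℝ) =>
        Fin.find? fun t => decide (b t + ω.2 t ≥ τ + ω.1)) ⁻¹' {some t})
        = {ω : ℝ × (Fin T → ℝ) | τ + ω.1 ≤ b t + ω.2 t}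
          ∩ ⋂ j, {ω : ℝ × (Fin T → ℝ) | τ + ω.1 ≤ b j + ω.2 j → t ≤ j} := by
      ext ω
      rw [Set.mem_preimage, Set.mem_singleton_iff, find?_dec_some]
      simp [Set.mem_iInter, ge_iff_le]
    rw [hset]
    refine (hP t).inter (MeasurableSet.iInter fun j => ?_)
    by_cases htj : t ≤ j
    · have : {ω : ℝ × (Fin T → ℝ) | τ + ω.1 ≤ b j + ω.2 j → t ≤ j} = Set.univ := by
        ext ω; simp [htj]
      rw [this]; exact MeasurableSet.univ
    · have : {ω : ℝ × (Fin T → ℝ) | τ + ω.1 ≤ b j + ω.2 j → t ≤ j}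
          = {ω : ℝ × (Fin T → ℝ) | τ + ω.1 ≤ b j + ω.2 j}ᶜ := by
        ext ω; simp [htj]
      rw [this]; exact (hP j).compl

/-- `Halt a` samples `τ̂ = τ + Lap(2/ε)` and independent fresh noises `v t ~ Lap(4/ε)`,
and outputs the smallest `t` with `a t + v t ≥ τ̂`, or `⊥` (`none`) if there is none.  If
`|a t − a' t| ≤ 1` for all `t`, then for every set `S` of outcomes,
`Pr[Halt a ∈ S] ≤ exp ε · Pr[Halt a' ∈ S]`. -/
theorem sparse_vector_halting_dp
    (ε : ℝ) (hε : 0 < ε) (τ : ℝ) (T : ℕ) (a a' : Fin T → ℝ)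
    (hsens : ∀ t, |a t - a' t| ≤ 1)
    (Halt : (Fin T → ℝ) → Measure (Option (Fin T)))
    (hHalt : ∀ b : Fin T → ℝ, Halt b =
      Measure.map
        (fun ω : ℝ × (Fin T → ℝ) => Fin.find? fun t => decide (b t + ω.2 t ≥ τ + ω.1))
        ((laplace (2 / ε)).prod (Measure.pi fun _ : Fin T => laplace (4 / ε))))
    (S : Set (Option (Fin T))) :
    Halt a S ≤ ENNReal.ofReal (Real.exp ε) * Halt a' S := by
  have hb₁ : (0:ℝ) < 2 / ε := by positivity
  have hb₂ : (0:ℝ) < 4 / ε := by positivity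
  set μ : Measure (ℝ × (Fin T → ℝ)) :=
    (laplace (2 / ε)).prod (Measure.pi fun _ : Fin T => laplace (4 / ε)) with hμ
  haveI : MeasurableSingletonClass (Option (Fin T)) :=
    ⟨fun _ => MeasurableSpace.measurableSet_top⟩
  have hmeas : ∀ b : Fin T → ℝ,
      Measurable (fun ω : ℝ × (Fin T → ℝ) => Fin.find? fun t => decide (b t + ω.2 t ≥ τ + ω.1)) :=
    fun b => measurable_to_countable' (find_preimage_measurable τ b)
  -- the key single-outcome bound
  have key : ∀ o : Option (Fin T),
      μ ((fun ω : ℝ × (Fin T → ℝ) => Fin.find? fun t => decide (a t + ω.2 t ≥ τ + ω.1)) ⁻¹' {o})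
        ≤ ENNReal.ofReal (Real.exp ε) *
          μ ((fun ω : ℝ × (Fin T → ℝ) => Fin.find? fun t => decide (a' t + ω.2 t ≥ τ + ω.1)) ⁻¹' {o}) := by
    intro o
    set w : Fin T → ℝ := fun s => if o = some s then 2 else 0 with hw
    set ψ : (Fin T → ℝ) → (Fin T → ℝ) := fun v s => v s + w s with hψ
    set φ : ℝ × (Fin T → ℝ) → ℝ × (Fin T → ℝ) := Prod.map (· + 1) ψ with hφ
    have hψm : Measurable ψ :=
      measurable_pi_lambda _ fun s =>
        (show Measurable fun v : Fin T → ℝ => v s + w s by fun_prop)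
    have hφm : Measurable φ := (measurable_add_const 1).prodMap hψm
    -- bound on the pi part
    have hpibound : Measure.map ψ (Measure.pi fun _ : Fin T => laplace (4 / ε))
        ≤ ENNReal.ofReal (Real.exp (ε / 2)) • Measure.pi fun _ : Fin T => laplace (4 / ε) := by
      have hhalf : (1:ℝ) ≤ Real.exp (ε / 2) := Real.one_le_exp (by positivity)
      cases o with
      | none =>
        have hid : ψ = id := by
          funext v s; simp [hψ, hw]
        rw [hid, Measure.map_id]
        refine Measure.le_iff'.mpr fun s => ?_
        rw [Measure.smul_apply, smul_eq_mul]
        exact le_mul_of_one_le_left zero_le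
          (ENNReal.one_le_ofReal.mpr hhalf)
      | some t =>
        have hψ' : ψ = fun v s => v s + (if s = t then (2:ℝ) else 0) := by
          funext v s
          simp only [hψ, hw, Option.some.injEq]
          by_cases h : s = t
          · simp [h]
          · rw [if_neg (fun hh => h hh.symm), if_neg h]
        have hconst : (2:ℝ) / (4 / ε) = ε / 2 := by
          field_simp
          ring
        have := pi_map_shift_le (4 / ε) hb₂ t 2
        rw [← hψ'] at this
        simpa [abs_of_nonneg, hconst] using this
    -- bound on the whole map
    have hmapb : Measure.map φ μ ≤ ENNReal.ofReal (Real.exp ε) • μ := by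
      have h1 := laplace_map_le (2 / ε) 1 hb₁
      have habs1 : |(1:ℝ)| / (2 / ε) = ε / 2 := by
        rw [abs_one]
        field_simp
      rw [habs1] at h1
      have hprod := prod_le_smul (ENNReal.ofReal (Real.exp (ε / 2)))
        (ENNReal.ofReal (Real.exp (ε / 2))) ENNReal.ofReal_ne_top h1 hpibound
      rw [hμ, hφ, ← Measure.map_prod_map _ _ (measurable_add_const 1) hψm]
      refine hprod.trans_eq ?_
      congr 1
      rw [← ENNReal.ofReal_mul (Real.exp_nonneg _), ← Real.exp_add, add_halves]
    -- inclusion of events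
    have hincl : ((fun ω : ℝ × (Fin T → ℝ) =>
          Fin.find? fun t => decide (a t + ω.2 t ≥ τ + ω.1)) ⁻¹' {o})
        ⊆ φ ⁻¹' ((fun ω : ℝ × (Fin T → ℝ) =>
          Fin.find? fun t => decide (a' t + ω.2 t ≥ τ + ω.1)) ⁻¹' {o}) := by
      intro ω hω
      rw [Set.mem_preimage, Set.mem_singleton_iff] at hω
      rw [Set.mem_preimage, Set.mem_preimage, Set.mem_singleton_iff]
      have hφω1 : (φ ω).1 = ω.1 + 1 := rfl
      have hφω2 : ∀ s, (φ ω).2 s = ω.2 s + w s := fun s => rfl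
      cases o with
      | none =>
        rw [find?_dec_none] at hω ⊢
        intro t ht
        have h0 : w t = 0 := by simp [hw]
        rw [hφω1, hφω2, h0] at ht
        have hlt := not_le.mp (hω t)
        have := abs_le.mp (hsens t)
        have hge : τ + (ω.1 + 1) ≤ a' t + (ω.2 t + 0) := ht
        linarith
      | some t =>
        rw [find?_dec_some] at hω ⊢
        obtain ⟨hPt, hmin⟩ := hω
        constructor
        · have h2 : w t = 2 := by simp [hw]
          have := abs_le.mp (hsens t)
          have hge : τ + ω.1 ≤ a t + ω.2 t := hPt
          show τ + (φ ω).1 ≤ a' t + (φ ω).2 t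
          rw [hφω1, hφω2, h2]
          linarith
        · intro j hj
          by_contra hne
          have hjt : j ≠ t := by
            intro hh; exact hne (hh ▸ le_refl t)
          have h0 : w j = 0 := by
            simp only [hw]
            rw [if_neg (by simpa using Ne.symm hjt)]
          rw [hφω1, hφω2 j, h0] at hj
          have hpj : ¬ (τ + ω.1 ≤ a j + ω.2 j) := fun hp => hne (hmin j hp)
          have hlt := not_le.mp hpj
          have := abs_le.mp (hsens j)
          have hge : τ + (ω.1 + 1) ≤ a' j + (ω.2 j + 0) := hj
          linarith
    calc μ ((fun ω : ℝ × (Fin T → ℝ) => Fin.find? fun t => decide (a t + ω.2 t ≥ τ + ω.1)) ⁻¹' {o})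
        ≤ μ (φ ⁻¹' ((fun ω : ℝ × (Fin T → ℝ) =>
            Fin.find? fun t => decide (a' t + ω.2 t ≥ τ + ω.1)) ⁻¹' {o})) := measure_mono hincl
      _ = (Measure.map φ μ) ((fun ω : ℝ × (Fin T → ℝ) =>
            Fin.find? fun t => decide (a' t + ω.2 t ≥ τ + ω.1)) ⁻¹' {o}) :=
          (Measure.map_apply hφm (find_preimage_measurable τ a' o)).symm
      _ ≤ (ENNReal.ofReal (Real.exp ε) • μ) ((fun ω : ℝ × (Fin T → ℝ) =>
            Fin.find? fun t => decide (a' t + ω.2 t ≥ τ + ω.1)) ⁻¹' {o}) :=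
          Measure.le_iff'.mp hmapb _
      _ = ENNReal.ofReal (Real.exp ε) *
          μ ((fun ω : ℝ × (Fin T → ℝ) =>
            Fin.find? fun t => decide (a' t + ω.2 t ≥ τ + ω.1)) ⁻¹' {o}) := by
          rw [Measure.smul_apply, smul_eq_mul]
  -- assemble over all outcomes in S
  rw [hHalt a, hHalt a',
    Measure.map_apply (hmeas a) MeasurableSpace.measurableSet_top,
    Measure.map_apply (hmeas a') MeasurableSpace.measurableSet_top]
  set Sf : Finset (Option (Fin T)) := (Set.toFinite S).toFinset with hSf
  have hdecomp : ∀ b : Fin T → ℝ,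
      ((fun ω : ℝ × (Fin T → ℝ) => Fin.find? fun t => decide (b t + ω.2 t ≥ τ + ω.1)) ⁻¹' S)
        = ⋃ o ∈ Sf, ((fun ω : ℝ × (Fin T → ℝ) =>
            Fin.find? fun t => decide (b t + ω.2 t ≥ τ + ω.1)) ⁻¹' {o}) := by
    intro b
    ext ω
    simp only [Set.mem_preimage, Set.mem_iUnion, Set.mem_singleton_iff, hSf,
      Set.Finite.mem_toFinset]
    constructor
    · intro hx; exact ⟨_, hx, rfl⟩
    · rintro ⟨p, hp, hq⟩; rw [hq]; exact hp
  have hdisj : ∀ b : Fin T → ℝ, (↑Sf : Set (Option (Fin T))).PairwiseDisjoint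
      fun o => ((fun ω : ℝ × (Fin T → ℝ) =>
        Fin.find? fun t => decide (b t + ω.2 t ≥ τ + ω.1)) ⁻¹' {o}) := by
    intro b o _ p _ hop
    refine Set.disjoint_left.mpr fun {ω} h1 h2 => hop ?_
    rw [Set.mem_preimage, Set.mem_singleton_iff] at h1 h2
    rw [← h1, ← h2]
  rw [hdecomp a, hdecomp a',
    measure_biUnion_finset (hdisj a) (fun o _ => find_preimage_measurable τ a o),
    measure_biUnion_finset (hdisj a') (fun o _ => find_preimage_measurable τ a' o),
    Finset.mul_sum]
  exact Finset.sum_le_sum fun o _ => key o
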